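/- A finite abelian group G has property X if and only if the order of G is odd. -/
import Mathlib

open Finset

/-- If `d ∣ 0 + 1 + ⋯ + (d-1)` and `0 < d` then `d` is odd. -/
private lemma odd_of_dvd_gauss {d : ℕ} (hd : 0 < d)
    (hdvd : d ∣ ∑ j ∈ range d, j) : Odd d := by
  obtain ⟨c, hc⟩ := hdvd
  have h2 : (∑ j ∈ range d, j) * 2 = d * (d - 1) := Finset.sum_range_id_mul_two d
  rw [hc] at h2
  have : 2 * c = d - 1 := Nat.eq_of_mul_eq_mul_left hd (by linarith [h2])
  exact ⟨c, by omega⟩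

/-- If `d` is odd then `d ∣ 0 + 1 + ⋯ + (d-1)`. -/
private lemma dvd_gauss_of_odd {d : ℕ} (hdodd : Odd d) :
    d ∣ ∑ j ∈ range d, j := by
  obtain ⟨t, ht⟩ := hdodd
  have h2 : (∑ j ∈ range d, j) * 2 = d * (d - 1) := Finset.sum_range_id_mul_two d
  have h3 : (∑ j ∈ range d, j) * 2 = (d * t) * 2 := by
    rw [h2, show d - 1 = 2 * t from by omega]; ring
  exact ⟨t, Nat.eq_of_mul_eq_mul_right (by norm_num) h3⟩

/-- Construction of the function `f` witnessing property X, given an element whose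
(odd) order kills the whole group. -/
private lemma propX_construct {G : Type*} [AddCommGroup G] (k : G) (d : ℕ) (hd0 : 0 < d)
    (hdk : d • k = 0) (hmin : ∀ a b : ℕ, a < d → b < d → a • k = b • k → a = b)
    (hdx : ∀ x : G, d • x = 0) (hdodd : Odd d) :
    ∃ f : G → G, ∀ x : G, f (x + k) - f x = x := by
  classical
  set r : G → G := fun x => (QuotientAddGroup.mk x : G ⧸ AddSubgroup.zmultiples k).out
    with hr
  have hmk : ∀ x : G,
      (QuotientAddGroup.mk (r x) : G ⧸ AddSubgroup.zmultiples k) = QuotientAddGroup.mk x :=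
    fun x => Quotient.out_eq _
  have hex : ∀ x : G, ∃ n : ℕ, x = r x + n • k := by
    intro x
    have hmem : x - r x ∈ AddSubgroup.zmultiples k := by
      rw [← QuotientAddGroup.eq_iff_sub_mem]
      exact (hmk x).symm
    obtain ⟨m, hm⟩ := AddSubgroup.mem_zmultiples_iff.mp hmem
    refine ⟨(m % (d : ℤ)).toNat, ?_⟩
    have hdz : (0 : ℤ) < (d : ℤ) := by exact_mod_cast hd0
    have hnn : (0 : ℤ) ≤ m % (d : ℤ) := Int.emod_nonneg m hdz.ne'
    have h1 : (((m % (d : ℤ)).toNat : ℤ)) = m % (d : ℤ) := Int.toNat_of_nonneg hnn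
    have hdkz : (d : ℤ) • k = 0 := by rw [natCast_zsmul]; exact hdk
    have h2 : ((m % (d : ℤ)).toNat : ℕ) • k = m • k := by
      rw [← natCast_zsmul, h1]
      conv_rhs => rw [← Int.emod_add_mul_ediv m (d : ℤ)]
      rw [add_zsmul, mul_comm, mul_zsmul, hdkz, smul_zero, add_zero]
    rw [h2, hm]
    abel
  have hi : ∀ x : G, x = r x + (Nat.find (hex x)) • k := fun x => Nat.find_spec (hex x)
  have hilt : ∀ x : G, Nat.find (hex x) < d := by
    intro x
    by_contra h
    push_neg at h
    have hx2 : x = r x + (Nat.find (hex x) - d) • k := by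
      have hsk : (Nat.find (hex x)) • k = (Nat.find (hex x) - d) • k + d • k := by
        rw [← add_nsmul, Nat.sub_add_cancel h]
      conv_lhs => rw [hi x]
      rw [hsk, hdk, add_zero]
    have := Nat.find_min' (hex x) hx2
    omega
  have hrk : ∀ x : G, r (x + k) = r x := by
    intro x
    have hq : (QuotientAddGroup.mk (x + k) : G ⧸ AddSubgroup.zmultiples k)
        = QuotientAddGroup.mk x := by
      rw [QuotientAddGroup.eq_iff_sub_mem]
      simp [AddSubgroup.mem_zmultiples]
    simp only [hr, hq]
  refine ⟨fun x => ∑ j ∈ range (Nat.find (hex x)), (r x + j • k), ?_⟩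
  intro x
  rw [sub_eq_iff_eq_add]
  show ∑ j ∈ range (Nat.find (hex (x + k))), (r (x + k) + j • k)
      = x + ∑ j ∈ range (Nat.find (hex x)), (r x + j • k)
  by_cases hcase : Nat.find (hex x) + 1 < d
  · have hsp : x + k = r x + (Nat.find (hex x) + 1) • k := by
      rw [succ_nsmul, ← add_assoc, ← hi x]
    have h1 : Nat.find (hex (x + k)) = Nat.find (hex x) + 1 := by
      have h4 : r x + Nat.find (hex (x + k)) • k
          = r x + (Nat.find (hex x) + 1) • k := by
        conv_lhs => rw [← hrk x]
        exact (hi (x + k)).symm.trans hsp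
      exact hmin _ _ (hilt _) hcase (add_left_cancel h4)
    rw [h1, hrk, Finset.sum_range_succ, ← hi x, add_comm]
  · have hix : Nat.find (hex x) + 1 = d := by have := hilt x; omega
    have h1 : Nat.find (hex (x + k)) = 0 := by
      have hsp : x + k = r (x + k) + (0 : ℕ) • k := by
        rw [hrk, zero_smul, add_zero]
        have hxk : x + k = r x + (Nat.find (hex x) + 1) • k := by
          rw [succ_nsmul, ← add_assoc, ← hi x]
        rw [hxk, hix, hdk, add_zero]
      have := Nat.find_min' (hex (x + k)) hsp
      omega
    have hgauss : (∑ j ∈ range d, j) • k = 0 := by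
      obtain ⟨c, hc⟩ := dvd_gauss_of_odd hdodd
      rw [hc, mul_comm, mul_nsmul', hdk, smul_zero]
    have hsum0 : ∑ j ∈ range d, (r x + j • k) = 0 := by
      rw [Finset.sum_add_distrib, Finset.sum_const, Finset.card_range,
        ← Finset.sum_smul, hdx (r x), hgauss, add_zero]
    rw [h1, Finset.range_zero, Finset.sum_empty]
    have hstep : x + ∑ j ∈ range (Nat.find (hex x)), (r x + j • k)
        = ∑ j ∈ range d, (r x + j • k) := by
      rw [← hix, Finset.sum_range_succ, ← hi x, add_comm]
    rw [hstep, hsum0]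

theorem propertyX_iff_odd_card (G : Type*) [AddCommGroup G] [Fintype G] :
    (∃ (k : G) (f : G → G), ∀ x : G, f (x + k) - f x = x) ↔
      Odd (Fintype.card G) := by
  constructor
  · rintro ⟨k, f, hf⟩
    have hf' : ∀ x, f (x + k) = f x + x := fun x => by
      have := hf x; rw [sub_eq_iff_eq_add] at this; rw [this, add_comm]
    have key : ∀ (n : ℕ) (x : G),
        f (x + n • k) = f x + ∑ j ∈ range n, (x + j • k) := by
      intro n
      induction n with
      | zero => intro x; simp
      | succ n ih =>
        intro x
        have hx : x + (n + 1) • k = (x + n • k) + k := by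
          rw [succ_nsmul, add_assoc]
        rw [hx, hf', ih, Finset.sum_range_succ, add_assoc]
    have hd0 : 0 < addOrderOf k := addOrderOf_pos k
    have hdk : addOrderOf k • k = 0 := addOrderOf_nsmul_eq_zero k
    have hsum : ∀ x : G, ∑ j ∈ range (addOrderOf k), (x + j • k) = 0 := by
      intro x
      have := key (addOrderOf k) x
      rw [hdk, add_zero, left_eq_add] at this
      exact this
    have hsplit : ∀ x : G,
        ∑ j ∈ range (addOrderOf k), (x + j • k)
          = addOrderOf k • x + (∑ j ∈ range (addOrderOf k), j) • k := by
      intro x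
      rw [Finset.sum_add_distrib, Finset.sum_const, Finset.card_range,
        Finset.sum_smul]
    have hS : (∑ j ∈ range (addOrderOf k), j) • k = 0 := by
      have := hsum 0
      rw [hsplit, smul_zero, zero_add] at this
      exact this
    have hdx : ∀ x : G, addOrderOf k • x = 0 := by
      intro x
      have := hsum x
      rw [hsplit, hS, add_zero] at this
      exact this
    have hdodd : Odd (addOrderOf k) :=
      odd_of_dvd_gauss hd0 (addOrderOf_dvd_of_nsmul_eq_zero hS)
    rcases Nat.even_or_odd (Fintype.card G) with he | ho
    · exfalso
      obtain ⟨g, hg⟩ := exists_prime_addOrderOf_dvd_card 2 (even_iff_two_dvd.mp he)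
      have hg2 : 2 • g = 0 := by rw [← hg]; exact addOrderOf_nsmul_eq_zero g
      have hgne : g ≠ 0 := by
        intro h; rw [h, addOrderOf_zero] at hg; omega
      obtain ⟨t, ht⟩ := hdodd
      have hgg : addOrderOf k • g = g := by
        rw [ht, add_nsmul, one_nsmul, mul_comm, mul_nsmul', hg2, smul_zero, zero_add]
      rw [hdx g] at hgg
      exact hgne hgg.symm
    · exact ho
  · intro hodd
    obtain ⟨k, hk⟩ := AddMonoid.exists_addOrderOf_eq_exponent
      (AddMonoid.ExponentExists.of_finite (G := G))
    have hd0 : 0 < addOrderOf k := addOrderOf_pos k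
    have hdk : addOrderOf k • k = 0 := addOrderOf_nsmul_eq_zero k
    have hdx : ∀ x : G, addOrderOf k • x = 0 := by
      intro x; rw [hk]; exact AddMonoid.exponent_nsmul_eq_zero x
    have hdodd : Odd (addOrderOf k) := by
      rcases Nat.even_or_odd (addOrderOf k) with he | ho
      · exfalso
        have hdc : addOrderOf k ∣ Fintype.card G := hk ▸ AddGroup.exponent_dvd_card
        have h2 : 2 ∣ Fintype.card G := (even_iff_two_dvd.mp he).trans hdc
        rw [← Nat.not_even_iff_odd] at hodd
        exact hodd (even_iff_two_dvd.mpr h2)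
      · exact ho
    have hmin : ∀ a b : ℕ, a < addOrderOf k → b < addOrderOf k → a • k = b • k → a = b := by
      intro a b ha hb hab
      rcases le_total a b with h | h
      · have hz : (b - a) • k = 0 := by
          rw [sub_nsmul k h, hab]; abel
        have := Nat.eq_zero_of_dvd_of_lt (addOrderOf_dvd_of_nsmul_eq_zero hz) (by omega)
        · omega
      · have hz : (a - b) • k = 0 := by
          rw [sub_nsmul k h, ← hab]; abel
        have := Nat.eq_zero_of_dvd_of_lt (addOrderOf_dvd_of_nsmul_eq_zero hz) (by omega)
        · omega
    obtain ⟨f, hff⟩ := propX_construct k (addOrderOf k) hd0 hdk hmin hdx hdodd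
    exact ⟨k, f, hff⟩
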